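/- arXiv:1902.07671 — 4 statements merged into one kernel-verified Lean document; each statement's English description precedes it below -/
import Mathlib

section
/- Let (Ω, μ) be a σ-finite measure space, K : Ω → ℂ measurable, A : Ω → GL(n,ℝ) measurable with ∫ |K(u)| |det A(u)|^(-1/2) dμ(u) < ∞. Then the Hausdorff operator (Hf)(x) = ∫_Ω K(u) f(A(u)x) dμ(u) is bounded on L²(ℝⁿ) with norm at most ∫_Ω |K(u)| |det A(u)|^(-1/2) dμ(u). -/
open MeasureTheory ENNReal

namespace HausdorffAux

variable {n : ℕ}

lemma measurable_mulVec (M : Matrix (Fin n) (Fin n) ℝ) :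
    Measurable fun x : Fin n → ℝ => M.mulVec x := by
  have h : (fun x : Fin n → ℝ => M.mulVec x) = ⇑(Matrix.toLin' M) := by
    funext x; rw [Matrix.toLin'_apply]
  rw [h]
  exact (Matrix.toLin' M).continuous_of_finiteDimensional.measurable

lemma map_mulVec_volume {M : Matrix (Fin n) (Fin n) ℝ} (hM : M.det ≠ 0) :
    Measure.map (M.mulVec) (volume : Measure (Fin n → ℝ))
      = ENNReal.ofReal |M.det|⁻¹ • volume := by
  have h : LinearMap.det (Matrix.toLin' M) ≠ 0 := by rwa [LinearMap.det_toLin']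
  have h2 := Real.map_linearMap_volume_pi_eq_smul_volume_pi h
  rw [LinearMap.det_toLin'] at h2
  have hcoe : (M.mulVec : (Fin n → ℝ) → (Fin n → ℝ)) = ⇑(Matrix.toLin' M) := by
    funext x; rw [Matrix.toLin'_apply]
  rw [hcoe, h2, abs_inv]

lemma lintegral_comp_mulVec {M : Matrix (Fin n) (Fin n) ℝ} (hM : M.det ≠ 0)
    {φ : (Fin n → ℝ) → ℝ≥0∞} (hφ : Measurable φ) :
    ∫⁻ x, φ (M.mulVec x) = ENNReal.ofReal |M.det|⁻¹ * ∫⁻ x, φ x := by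
  rw [← lintegral_map hφ (measurable_mulVec M), map_mulVec_volume hM,
    lintegral_smul_measure, smul_eq_mul]

lemma mulVec_preimage_null {M : Matrix (Fin n) (Fin n) ℝ} (hM : M.det ≠ 0)
    {N : Set (Fin n → ℝ)} (hNm : MeasurableSet N) (hN : volume N = 0) :
    volume {x | M.mulVec x ∈ N} = 0 := by
  have h2 : Measure.map (M.mulVec) (volume : Measure (Fin n → ℝ)) N = 0 := by
    rw [map_mulVec_volume hM]; simp [hN]
  rwa [Measure.map_apply (measurable_mulVec M) hNm] at h2
variable {n : ℕ}

lemma H_congr {Ω : Type*} [MeasurableSpace Ω] (μ : Measure Ω) [SigmaFinite μ]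
    (K : Ω → ℂ) (A : Ω → Matrix (Fin n) (Fin n) ℝ)
    (hAm : Measurable fun p : Ω × (Fin n → ℝ) => (A p.1).mulVec p.2)
    (hAinv : ∀ u, (A u).det ≠ 0)
    {g₁ g₂ : (Fin n → ℝ) → ℂ} (hg : g₁ =ᵐ[volume] g₂) :
    ∀ᵐ x ∂(volume : Measure (Fin n → ℝ)),
      ∀ᵐ u ∂μ, g₁ ((A u).mulVec x) = g₂ ((A u).mulVec x) := by
  obtain ⟨N, hNsub, hNm, hN0⟩ :=
    exists_measurable_superset_of_null (μ := (volume : Measure (Fin n → ℝ)))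
      (s := {y | g₁ y ≠ g₂ y}) hg
  set s : Set (Ω × (Fin n → ℝ)) := {p | (A p.1).mulVec p.2 ∈ N} with hs
  have hsm : MeasurableSet s := hAm hNm
  have hs0 : (μ.prod volume) s = 0 := by
    rw [Measure.measure_prod_null hsm]
    refine Filter.Eventually.of_forall fun u => ?_
    show volume (Prod.mk u ⁻¹' s) = (0 : Ω → ℝ≥0∞) u
    have h1 : Prod.mk u ⁻¹' s = {x | (A u).mulVec x ∈ N} := rfl
    rw [h1]
    simpa using mulVec_preimage_null (hAinv u) hNm hN0
  -- swap
  set t : Set ((Fin n → ℝ) × Ω) := Prod.swap ⁻¹' s with ht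
  have ht0 : ((volume : Measure (Fin n → ℝ)).prod μ) t = 0 := by
    rw [ht, ← Measure.map_apply measurable_swap hsm, Measure.prod_swap, hs0]
  have := Measure.measure_ae_null_of_prod_null ht0
  filter_upwards [this] with x hx
  have hx' : μ {u | (A u).mulVec x ∈ N} = 0 := by
    have : Prod.mk x ⁻¹' t = {u | (A u).mulVec x ∈ N} := rfl
    rwa [this] at hx
  have : ∀ᵐ u ∂μ, (A u).mulVec x ∉ N := by
    rw [ae_iff]; simpa using hx'
  filter_upwards [this] with u hu
  by_contra hne
  exact hu (hNsub hne)

end HausdorffAux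

open HausdorffAux

/-- The multidimensional Hausdorff operator is bounded on L²(ℝⁿ) with norm at most
`∫ |K u| * |det A u|^(-1/2) dμ`. -/
theorem hausdorff_multidim_bounded
    {Ω : Type*} [MeasurableSpace Ω] (μ : Measure Ω) [SigmaFinite μ] {n : ℕ}
    (K : Ω → ℂ) (hK : Measurable K)
    (A : Ω → Matrix (Fin n) (Fin n) ℝ) (hA : ∀ i j, Measurable fun u => A u i j)
    (hAinv : ∀ u, (A u).det ≠ 0)
    (hint : Integrable (fun u => ‖K u‖ * |(A u).det| ^ (-(1:ℝ)/2)) μ) :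
    ∃ T : Lp ℂ 2 (volume : Measure (Fin n → ℝ)) →L[ℂ] Lp ℂ 2 (volume : Measure (Fin n → ℝ)),
      (∀ f : Lp ℂ 2 (volume : Measure (Fin n → ℝ)),
        (T f : (Fin n → ℝ) → ℂ) =ᵐ[volume]
          fun x => ∫ u, K u * (f : (Fin n → ℝ) → ℂ) ((A u).mulVec x) ∂μ) ∧
      ‖T‖ ≤ ∫ u, ‖K u‖ * |(A u).det| ^ (-(1:ℝ)/2) ∂μ := by
  classical
  set C : ℝ := ∫ u, ‖K u‖ * |(A u).det| ^ (-(1:ℝ)/2) ∂μ with hCdef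
  have hC0 : 0 ≤ C := integral_nonneg fun u =>
    mul_nonneg (norm_nonneg _) (Real.rpow_nonneg (abs_nonneg _) _)
  -- joint measurability of (u, x) ↦ A u *ᵥ x
  have hAm : Measurable fun p : Ω × (Fin n → ℝ) => (A p.1).mulVec p.2 := by
    apply measurable_pi_lambda
    intro i
    have h1 : (fun p : Ω × (Fin n → ℝ) => (A p.1).mulVec p.2 i)
        = fun p : Ω × (Fin n → ℝ) => ∑ j, A p.1 i j * p.2 j := by
      funext p; simp [Matrix.mulVec, dotProduct]
    rw [h1]
    exact Finset.measurable_sum _ fun j _ =>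
      ((hA i j).comp measurable_fst).mul ((measurable_pi_apply j).comp measurable_snd)
  -- measurability of the determinant weight
  have hdet : Measurable fun u => (A u).det := by
    simp_rw [Matrix.det_apply, Units.smul_def, zsmul_eq_mul]
    exact Finset.measurable_sum _ fun σ _ =>
      measurable_const.mul (Finset.measurable_prod _ fun i _ => hA (σ i) i)
  have hw : Measurable fun u => ENNReal.ofReal (|(A u).det| ^ (-(1:ℝ)/2)) :=
    ENNReal.measurable_ofReal.comp ((hdet.abs).pow_const _)
  set L : ℝ≥0∞ := ∫⁻ u, (‖K u‖₊ : ℝ≥0∞) * ENNReal.ofReal (|(A u).det| ^ (-(1:ℝ)/2)) ∂μ with hLdef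
  have hL : L = ENNReal.ofReal C := by
    rw [hCdef, MeasureTheory.ofReal_integral_eq_lintegral_ofReal hint
      (Filter.Eventually.of_forall fun u =>
        mul_nonneg (norm_nonneg _) (Real.rpow_nonneg (abs_nonneg _) _)), hLdef]
    congr 1; funext u
    rw [ENNReal.ofReal_mul (norm_nonneg _), ofReal_norm, enorm_eq_nnnorm]
  have hLtop : L ≠ ⊤ := by rw [hL]; exact ENNReal.ofReal_ne_top
  have hconj : (2:ℝ).HolderConjugate 2 := Real.HolderConjugate.two_two
  -- main per-function estimate
  have main : ∀ f : Lp ℂ 2 (volume : Measure (Fin n → ℝ)),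
      MemLp (fun x => ∫ u, K u * (f : (Fin n → ℝ) → ℂ) ((A u).mulVec x) ∂μ) 2
        (volume : Measure (Fin n → ℝ)) ∧
      eLpNorm (fun x => ∫ u, K u * (f : (Fin n → ℝ) → ℂ) ((A u).mulVec x) ∂μ) 2
        (volume : Measure (Fin n → ℝ)) ≤ L * eLpNorm (⇑f) 2 (volume : Measure (Fin n → ℝ)) ∧
      (∀ᵐ x ∂(volume : Measure (Fin n → ℝ)),
        Integrable (fun u => K u * (f : (Fin n → ℝ) → ℂ) ((A u).mulVec x)) μ) := by
    intro f
    set g : (Fin n → ℝ) → ℂ := ⇑f with hgdef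
    have hgm : Measurable g := (Lp.stronglyMeasurable f).measurable
    set N2 : ℝ≥0∞ := eLpNorm g 2 (volume : Measure (Fin n → ℝ)) with hN2def
    have hN2top : N2 ≠ ⊤ := (Lp.memLp f).2.ne
    set Eg : ℝ≥0∞ := ∫⁻ x, (‖g x‖₊ : ℝ≥0∞) ^ (2:ℝ) with hEgdef
    have hgnm : Measurable fun y => (‖g y‖₊ : ℝ≥0∞) ^ (2:ℝ) :=
      (measurable_coe_nnreal_ennreal.comp hgm.nnnorm).pow_const _
    have hN2eq : N2 = Eg ^ (1/(2:ℝ)) := by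
      rw [hN2def, eLpNorm_eq_lintegral_rpow_enorm_toReal two_ne_zero ENNReal.ofNat_ne_top, hEgdef]
      norm_num
      rfl
    set q : Ω → (Fin n → ℝ) → ℝ≥0∞ :=
      fun u x => (‖K u‖₊ : ℝ≥0∞) * (‖g ((A u).mulVec x)‖₊ : ℝ≥0∞) with hqdef
    have hqm : Measurable fun p : Ω × (Fin n → ℝ) => q p.1 p.2 :=
      (measurable_coe_nnreal_ennreal.comp (hK.comp measurable_fst).nnnorm).mul
        (measurable_coe_nnreal_ennreal.comp (hgm.comp hAm).nnnorm)
    have hqum : ∀ x, Measurable fun u => q u x := fun x =>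
      Measurable.of_uncurry_right (f := q) hqm
    have hqxm : ∀ u, Measurable fun x => q u x := fun u =>
      Measurable.of_uncurry_left (f := q) hqm
    set r : Ω → ℝ≥0∞ :=
      fun u => (‖K u‖₊ : ℝ≥0∞) * ENNReal.ofReal (|(A u).det| ^ (-(1:ℝ)/2)) * N2 with hrdef
    have hrm : Measurable r :=
      ((measurable_coe_nnreal_ennreal.comp hK.nnnorm).mul hw).mul measurable_const
    have hrtop : ∀ u, r u ≠ ⊤ := fun u => by
      rw [hrdef]
      exact ENNReal.mul_ne_top (ENNReal.mul_ne_top ENNReal.coe_ne_top ENNReal.ofReal_ne_top) hN2top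
    have hrval : ∀ u, (∫⁻ x, (q u x) ^ (2:ℝ)) ^ (1/(2:ℝ)) = r u := by
      intro u
      have hdp : (0:ℝ) < |(A u).det| := abs_pos.2 (hAinv u)
      have h1 : ∀ x, (q u x) ^ (2:ℝ)
          = (‖K u‖₊ : ℝ≥0∞) ^ (2:ℝ) * (‖g ((A u).mulVec x)‖₊ : ℝ≥0∞) ^ (2:ℝ) := fun x =>
        ENNReal.mul_rpow_of_nonneg _ _ (by norm_num)
      simp_rw [h1]
      rw [lintegral_const_mul' _ _ (ENNReal.rpow_ne_top_of_nonneg (by norm_num) ENNReal.coe_ne_top)]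
      rw [lintegral_comp_mulVec (hAinv u) hgnm]
      rw [← hEgdef, ← mul_assoc,
        ENNReal.mul_rpow_of_nonneg _ _ (by norm_num : (0:ℝ) ≤ 1/2),
        ENNReal.mul_rpow_of_nonneg _ _ (by norm_num : (0:ℝ) ≤ 1/2), ← hN2eq, hrdef]
      congr 1
      congr 1
      · rw [← ENNReal.rpow_mul]
        norm_num
      · rw [ENNReal.ofReal_rpow_of_pos (inv_pos.2 hdp)]
        congr 1
        rw [Real.inv_rpow (abs_nonneg _), ← Real.rpow_neg (abs_nonneg _)]
        norm_num
    have hrint : ∫⁻ u, r u ∂μ = L * N2 := by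
      simp only [hrdef, hLdef]
      exact lintegral_mul_const' _ _ hN2top
    -- the pointwise majorant
    set Φ : (Fin n → ℝ) → ℝ≥0∞ := fun x => ∫⁻ u, q u x ∂μ with hΦdef
    have hΦm : Measurable Φ := by
      have h := (hqm.comp measurable_swap).lintegral_prod_right' (ν := μ)
      exact h
    -- the key Minkowski-type bound, proved via Tonelli and Cauchy-Schwarz
    have key : ∫⁻ x, (Φ x) ^ (2:ℝ) ≤ (L * N2) * (L * N2) := by
      have h1 : ∀ x, (Φ x) ^ (2:ℝ) = ∫⁻ u, ∫⁻ v, q u x * q v x ∂μ ∂μ := by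
        intro x
        rw [ENNReal.rpow_two, sq, hΦdef]
        calc (∫⁻ u, q u x ∂μ) * (∫⁻ v, q v x ∂μ)
            = ∫⁻ u, q u x * ∫⁻ v, q v x ∂μ ∂μ := (lintegral_mul_const _ (hqum x)).symm
          _ = ∫⁻ u, ∫⁻ v, q u x * q v x ∂μ ∂μ := by
              refine lintegral_congr fun u => ?_
              exact (lintegral_const_mul _ (hqum x)).symm
      calc ∫⁻ x, (Φ x) ^ (2:ℝ)
          = ∫⁻ x, (∫⁻ u, ∫⁻ v, q u x * q v x ∂μ ∂μ) := by simp_rw [h1]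
        _ = ∫⁻ u, (∫⁻ x, ∫⁻ v, q u x * q v x ∂μ) ∂μ := by
            refine lintegral_lintegral_swap ?_
            have heq : (Function.uncurry fun x u => ∫⁻ v, q u x * q v x ∂μ)
                = fun p : (Fin n → ℝ) × Ω => q p.2 p.1 * Φ p.1 := by
              funext p
              exact lintegral_const_mul _ (hqum p.1)
            rw [heq]
            exact ((hqm.comp measurable_swap).mul (hΦm.comp measurable_fst)).aemeasurable
        _ = ∫⁻ u, (∫⁻ v, (∫⁻ x, q u x * q v x) ∂μ) ∂μ := by
            refine lintegral_congr fun u => ?_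
            refine lintegral_lintegral_swap ?_
            exact (((hqxm u).comp measurable_fst).mul (hqm.comp measurable_swap)).aemeasurable
        _ ≤ ∫⁻ u, (∫⁻ v, r u * r v ∂μ) ∂μ := by
            refine lintegral_mono fun u => lintegral_mono fun v => ?_
            calc ∫⁻ x, q u x * q v x
                ≤ (∫⁻ x, (q u x) ^ (2:ℝ)) ^ (1/(2:ℝ)) * (∫⁻ x, (q v x) ^ (2:ℝ)) ^ (1/(2:ℝ)) :=
                  ENNReal.lintegral_mul_le_Lp_mul_Lq volume hconj
                    (hqxm u).aemeasurable (hqxm v).aemeasurable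
              _ = r u * r v := by rw [hrval u, hrval v]
        _ = (L * N2) * (L * N2) := by
            rw [← hrint, lintegral_congr fun u => lintegral_const_mul' (r u) r (hrtop u)]
            exact lintegral_mul_const' _ _ (by rw [hrint]; exact ENNReal.mul_ne_top hLtop hN2top)
    -- strong measurability of the Hausdorff integral
    have hHsm : StronglyMeasurable fun x => ∫ u, K u * g ((A u).mulVec x) ∂μ := by
      have hF : StronglyMeasurable fun p : (Fin n → ℝ) × Ω => K p.2 * g ((A p.2).mulVec p.1) :=
        ((hK.comp measurable_snd).mul (hgm.comp (hAm.comp measurable_swap))).stronglyMeasurable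
      exact hF.integral_prod_right'
    -- pointwise domination by Φ
    have hHbound : ∀ x, (‖∫ u, K u * g ((A u).mulVec x) ∂μ‖₊ : ℝ≥0∞) ≤ Φ x := by
      intro x
      refine le_trans (enorm_integral_le_lintegral_enorm _) (le_of_eq ?_)
      refine lintegral_congr fun u => ?_
      simp [hqdef, nnnorm_mul, ENNReal.coe_mul]
      rfl
    have hsq : ∀ a : ℝ≥0∞, (a * a) ^ (1/(2:ℝ)) = a := by
      intro a
      rw [show a * a = a ^ (2:ℝ) by rw [ENNReal.rpow_two, sq], ← ENNReal.rpow_mul]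
      norm_num
    have heLp : eLpNorm (fun x => ∫ u, K u * g ((A u).mulVec x) ∂μ) 2
        (volume : Measure (Fin n → ℝ)) ≤ L * N2 := by
      rw [eLpNorm_eq_lintegral_rpow_enorm_toReal two_ne_zero ENNReal.ofNat_ne_top]
      have h2 : ENNReal.toReal 2 = (2:ℝ) := by norm_num
      rw [h2]
      calc (∫⁻ x, (‖∫ u, K u * g ((A u).mulVec x) ∂μ‖₊ : ℝ≥0∞) ^ (2:ℝ)) ^ (1/(2:ℝ))
          ≤ (∫⁻ x, (Φ x) ^ (2:ℝ)) ^ (1/(2:ℝ)) := by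
            refine ENNReal.rpow_le_rpow ?_ (by norm_num)
            exact lintegral_mono fun x => ENNReal.rpow_le_rpow (hHbound x) (by norm_num)
        _ ≤ ((L * N2) * (L * N2)) ^ (1/(2:ℝ)) := ENNReal.rpow_le_rpow key (by norm_num)
        _ = L * N2 := hsq _
    have hLN2top : L * N2 ≠ ⊤ := ENNReal.mul_ne_top hLtop hN2top
    have hmem : MemLp (fun x => ∫ u, K u * g ((A u).mulVec x) ∂μ) 2
        (volume : Measure (Fin n → ℝ)) :=
      ⟨hHsm.aestronglyMeasurable, lt_of_le_of_lt heLp (lt_top_iff_ne_top.2 hLN2top)⟩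
    -- a.e. integrability
    have hΦfin : ∀ᵐ x ∂(volume : Measure (Fin n → ℝ)), Φ x < ⊤ := by
      have hfin : ∫⁻ x, (Φ x) ^ (2:ℝ) ≠ ⊤ :=
        ne_top_of_le_ne_top (ENNReal.mul_ne_top hLN2top hLN2top) key
      have h2 := ae_lt_top (hΦm.pow_const (2:ℝ)) hfin
      filter_upwards [h2] with x hx
      exact (ENNReal.rpow_lt_top_iff_of_pos (by norm_num : (0:ℝ) < 2)).1 hx
    have hintae : ∀ᵐ x ∂(volume : Measure (Fin n → ℝ)),
        Integrable (fun u => K u * g ((A u).mulVec x)) μ := by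
      filter_upwards [hΦfin] with x hx
      refine ⟨(hK.mul (hgm.comp (hAm.comp
        (measurable_id.prodMk measurable_const)))).aestronglyMeasurable, ?_⟩
      show (∫⁻ u, (‖K u * g ((A u).mulVec x)‖₊ : ℝ≥0∞) ∂μ) < ⊤
      have heq : (∫⁻ u, (‖K u * g ((A u).mulVec x)‖₊ : ℝ≥0∞) ∂μ) = Φ x := by
        refine lintegral_congr fun u => ?_
        simp [hqdef, nnnorm_mul, ENNReal.coe_mul]
      rw [heq]; exact hx
    exact ⟨hmem, heLp, hintae⟩
  -- build the linear operator
  let T0 : Lp ℂ 2 (volume : Measure (Fin n → ℝ)) →ₗ[ℂ] Lp ℂ 2 (volume : Measure (Fin n → ℝ)) :=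
    { toFun := fun f => ((main f).1).toLp _
      map_add' := by
        intro f g'
        rw [← MemLp.toLp_add]
        refine MemLp.toLp_congr _ _ ?_
        have hc := H_congr μ K A hAm hAinv (Lp.coeFn_add f g')
        filter_upwards [hc, (main f).2.2, (main g').2.2] with x h1 h2 h3
        show (∫ u, K u * (⇑(f + g') : (Fin n → ℝ) → ℂ) ((A u).mulVec x) ∂μ)
          = (∫ u, K u * (⇑f : (Fin n → ℝ) → ℂ) ((A u).mulVec x) ∂μ)
            + ∫ u, K u * (⇑g' : (Fin n → ℝ) → ℂ) ((A u).mulVec x) ∂μ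
        calc (∫ u, K u * (⇑(f + g') : (Fin n → ℝ) → ℂ) ((A u).mulVec x) ∂μ)
            = ∫ u, (K u * (⇑f : (Fin n → ℝ) → ℂ) ((A u).mulVec x)
                + K u * (⇑g' : (Fin n → ℝ) → ℂ) ((A u).mulVec x)) ∂μ := by
              refine integral_congr_ae ?_
              filter_upwards [h1] with u hu
              rw [hu]
              simp only [Pi.add_apply]
              ring
          _ = _ := integral_add h2 h3
      map_smul' := by
        intro c f
        rw [RingHom.id_apply, ← MemLp.toLp_const_smul c (main f).1]
        refine MemLp.toLp_congr (main (c • f)).1 ((main f).1.const_smul c) ?_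
        have hc := H_congr μ K A hAm hAinv (Lp.coeFn_smul c f)
        filter_upwards [hc] with x h1
        show (∫ u, K u * (⇑(c • f) : (Fin n → ℝ) → ℂ) ((A u).mulVec x) ∂μ)
          = (c • fun y => ∫ u, K u * (⇑f : (Fin n → ℝ) → ℂ) ((A u).mulVec y) ∂μ) x
        simp only [Pi.smul_apply, smul_eq_mul]
        calc (∫ u, K u * (⇑(c • f) : (Fin n → ℝ) → ℂ) ((A u).mulVec x) ∂μ)
            = ∫ u, c • (K u * (⇑f : (Fin n → ℝ) → ℂ) ((A u).mulVec x)) ∂μ := by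
              refine integral_congr_ae ?_
              filter_upwards [h1] with u hu
              rw [hu]
              simp only [Pi.smul_apply, smul_eq_mul]
              ring
          _ = c * ∫ u, K u * (⇑f : (Fin n → ℝ) → ℂ) ((A u).mulVec x) ∂μ := by
              rw [integral_smul, smul_eq_mul] }
  have hbound : ∀ f, ‖T0 f‖ ≤ C * ‖f‖ := by
    intro f
    have h1 : ‖T0 f‖ = (eLpNorm (fun x => ∫ u, K u * (⇑f : (Fin n → ℝ) → ℂ) ((A u).mulVec x) ∂μ)
        2 (volume : Measure (Fin n → ℝ))).toReal := Lp.norm_toLp _ (main f).1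
    rw [h1, Lp.norm_def]
    have h2 := (main f).2.1
    rw [hL] at h2
    calc (eLpNorm (fun x => ∫ u, K u * (⇑f : (Fin n → ℝ) → ℂ) ((A u).mulVec x) ∂μ)
          2 (volume : Measure (Fin n → ℝ))).toReal
        ≤ (ENNReal.ofReal C * eLpNorm (⇑f) 2 (volume : Measure (Fin n → ℝ))).toReal :=
          ENNReal.toReal_mono (ENNReal.mul_ne_top ENNReal.ofReal_ne_top (Lp.memLp f).2.ne) h2
      _ = C * (eLpNorm (⇑f) 2 (volume : Measure (Fin n → ℝ))).toReal := by
          rw [ENNReal.toReal_mul, ENNReal.toReal_ofReal hC0]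
  refine ⟨T0.mkContinuous C hbound, fun f => ?_, ?_⟩
  · exact MemLp.coeFn_toLp (main f).1
  · exact LinearMap.mkContinuous_norm_le _ hC0 _
end

section
/- If (A(u))_{u∈Ω} is a commuting family of invertible real n×n matrices and ∫ |K(u)| |det A(u)|^(-1/2) dμ(u) < ∞, then the Hausdorff operator H_{K,A} on L²(ℝⁿ) is a normal operator, i.e., H H* = H* H. -/
set_option maxHeartbeats 2000000

open MeasureTheory Matrix
open scoped ENNReal ComplexConjugate

namespace HausdorffNormalAux

variable {n : ℕ}

lemma measurable_mulVec (M : Matrix (Fin n) (Fin n) ℝ) :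
    Measurable fun x : Fin n → ℝ => M.mulVec x := by
  apply measurable_pi_lambda
  intro i
  simp only [Matrix.mulVec, dotProduct]
  exact Finset.measurable_sum _ fun j _ => measurable_const.mul (measurable_pi_apply j)

lemma map_mulVec {M : Matrix (Fin n) (Fin n) ℝ} (hM : M.det ≠ 0) :
    Measure.map (fun x : Fin n → ℝ => M.mulVec x) volume
      = ENNReal.ofReal |M.det|⁻¹ • volume := by
  have h := Real.map_matrix_volume_pi_eq_smul_volume_pi (M := M) hM
  have e : (fun x : Fin n → ℝ => M.mulVec x) = ⇑(Matrix.toLin' M) := by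
    funext x; simp [Matrix.toLin'_apply]
  rw [e, h, abs_inv]

lemma qmp_mulVec {M : Matrix (Fin n) (Fin n) ℝ} (hM : M.det ≠ 0) :
    Measure.QuasiMeasurePreserving (fun x : Fin n → ℝ => M.mulVec x) volume volume :=
  ⟨measurable_mulVec M, by
    rw [map_mulVec hM]; exact Measure.smul_absolutelyContinuous⟩

lemma ae_comp_mulVec {M : Matrix (Fin n) (Fin n) ℝ} (hM : M.det ≠ 0)
    {f g : (Fin n → ℝ) → ℂ} (h : f =ᵐ[volume] g) :
    (fun x => f (M.mulVec x)) =ᵐ[volume] fun x => g (M.mulVec x) :=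
  (qmp_mulVec hM).ae_eq_comp h

lemma eLpNorm_comp_mulVec {M : Matrix (Fin n) (Fin n) ℝ} (hM : M.det ≠ 0)
    {f : (Fin n → ℝ) → ℂ} (hf : AEStronglyMeasurable f volume) :
    eLpNorm (fun x => f (M.mulVec x)) 2 volume
      = ENNReal.ofReal |M.det|⁻¹ ^ ((1:ℝ)/2) * eLpNorm f 2 volume := by
  have hf' : AEStronglyMeasurable f
      (Measure.map (fun x : Fin n → ℝ => M.mulVec x) volume) := by
    rw [map_mulVec hM]; exact AEStronglyMeasurable.mono_ac Measure.smul_absolutelyContinuous hf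
  have := eLpNorm_map_measure (p := 2) hf' (measurable_mulVec M).aemeasurable
  rw [map_mulVec hM, eLpNorm_smul_measure_of_ne_top (by norm_num : (2:ℝ≥0∞) ≠ ∞)] at this
  rw [show (fun x : Fin n → ℝ => f (M.mulVec x)) = f ∘ fun x => M.mulVec x from rfl, ← this,
    smul_eq_mul]
  congr 1
  norm_num


lemma memℒp_comp_mulVec {M : Matrix (Fin n) (Fin n) ℝ} (hM : M.det ≠ 0)
    {f : (Fin n → ℝ) → ℂ} (hf : MemLp f 2 volume) :
    MemLp (fun x => f (M.mulVec x)) 2 volume := by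
  refine ⟨hf.1.comp_quasiMeasurePreserving (qmp_mulVec hM), ?_⟩
  rw [eLpNorm_comp_mulVec hM hf.1]
  exact ENNReal.mul_lt_top
    (ENNReal.rpow_lt_top_of_nonneg (by norm_num) ENNReal.ofReal_ne_top) hf.2

lemma toReal_eLpNorm_comp_mulVec {M : Matrix (Fin n) (Fin n) ℝ} (hM : M.det ≠ 0)
    {f : (Fin n → ℝ) → ℂ} (hf : AEStronglyMeasurable f volume) :
    (eLpNorm (fun x => f (M.mulVec x)) 2 volume).toReal
      = |M.det| ^ (-(1:ℝ)/2) * (eLpNorm f 2 volume).toReal := by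
  rw [eLpNorm_comp_mulVec hM hf, ENNReal.toReal_mul, ← ENNReal.toReal_rpow,
    ENNReal.toReal_ofReal (inv_nonneg.2 (abs_nonneg _)),
    Real.inv_rpow (abs_nonneg _), ← Real.rpow_neg (abs_nonneg _)]
  norm_num

lemma integral_comp_mulVec {M : Matrix (Fin n) (Fin n) ℝ} (hM : M.det ≠ 0)
    {φ : (Fin n → ℝ) → ℂ} (hφ : AEStronglyMeasurable φ volume) :
    ∫ x, φ (M.mulVec x) = ((|M.det|⁻¹ : ℝ) : ℂ) * ∫ x, φ x := by
  have hφ' : AEStronglyMeasurable φ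
      (Measure.map (fun x : Fin n → ℝ => M.mulVec x) volume) := by
    rw [map_mulVec hM]; exact AEStronglyMeasurable.mono_ac Measure.smul_absolutelyContinuous hφ
  rw [← integral_map (measurable_mulVec M).aemeasurable hφ', map_mulVec hM,
    integral_smul_measure, ENNReal.toReal_ofReal (inv_nonneg.2 (abs_nonneg _))]
  rw [Complex.real_smul]

lemma cs_bound {α : Type*} [MeasurableSpace α] {ν : Measure α} {φ ψ : α → ℂ}
    (hφ : MemLp φ 2 ν) (hψ : MemLp ψ 2 ν) :
    ∫ x, ‖φ x‖ * ‖ψ x‖ ∂ν ≤ (eLpNorm φ 2 ν).toReal * (eLpNorm ψ 2 ν).toReal := by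
  have h2 : (ENNReal.ofReal (2:ℝ)) = 2 := by norm_num
  have hpq : (2:ℝ).HolderConjugate 2 := ⟨by norm_num, by norm_num, by norm_num⟩
  have hb := integral_mul_norm_le_Lp_mul_Lq hpq (h2 ▸ hφ) (h2 ▸ hψ)
  rw [hφ.eLpNorm_eq_integral_rpow_norm two_ne_zero ENNReal.ofNat_ne_top,
    hψ.eLpNorm_eq_integral_rpow_norm two_ne_zero ENNReal.ofNat_ne_top,
    ENNReal.toReal_ofReal (by positivity), ENNReal.toReal_ofReal (by positivity)]
  simpa [ENNReal.toReal_ofNat, one_div] using hb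

lemma memℒp_conj {α : Type*} [MeasurableSpace α] {ν : Measure α} {φ : α → ℂ}
    (hφ : MemLp φ 2 ν) : MemLp (fun x => (starRingEnd ℂ) (φ x)) 2 ν := by
  refine ⟨Complex.continuous_conj.comp_aestronglyMeasurable hφ.1, ?_⟩
  rw [eLpNorm_congr_norm_ae (g := φ) (Filter.Eventually.of_forall fun x => by simp)]
  exact hφ.2

lemma integrable_mul_memℒp2 {α : Type*} [MeasurableSpace α] {ν : Measure α} {φ ψ : α → ℂ}
    (hφ : MemLp φ 2 ν) (hψ : MemLp ψ 2 ν) :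
    Integrable (fun x => φ x * ψ x) ν := by
  have h := hψ.smul (q := 2) (p := 2) (φ := φ) (r := 1) hφ
  rw [memLp_one_iff_integrable] at h
  simpa [smul_eq_mul, Pi.mul_def] using h

lemma inv_comm {M N : Matrix (Fin n) (Fin n) ℝ} (hM : M.det ≠ 0)
    (h : M * N = N * M) : M⁻¹ * N = N * M⁻¹ := by
  have hu : IsUnit M.det := isUnit_iff_ne_zero.2 hM
  calc M⁻¹ * N = M⁻¹ * N * (M * M⁻¹) := by rw [Matrix.mul_nonsing_inv _ hu, mul_one]
    _ = M⁻¹ * (N * M) * M⁻¹ := by rw [Matrix.mul_assoc, ← Matrix.mul_assoc N, ← Matrix.mul_assoc]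
    _ = M⁻¹ * (M * N) * M⁻¹ := by rw [h]
    _ = N * M⁻¹ := by rw [← Matrix.mul_assoc, Matrix.nonsing_inv_mul _ hu, one_mul]


lemma measurable_mulVec_pair {γ : Type*} [MeasurableSpace γ]
    {B : γ → Matrix (Fin n) (Fin n) ℝ} (hB : ∀ i j, Measurable fun c => B c i j) :
    Measurable fun q : γ × (Fin n → ℝ) => (B q.1).mulVec q.2 := by
  apply measurable_pi_lambda
  intro i
  simp only [Matrix.mulVec, dotProduct]
  exact Finset.measurable_sum _ fun j _ =>
    ((hB i j).comp measurable_fst).mul ((measurable_pi_apply j).comp measurable_snd)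

end HausdorffNormalAux


open HausdorffNormalAux

/-- If the matrices `A u` form a commuting family, the Hausdorff operator on L²(ℝⁿ)
is normal: `H H* = H* H`. -/
theorem hausdorff_normal
    {Ω : Type*} [MeasurableSpace Ω] (μ : Measure Ω) [SigmaFinite μ] {n : ℕ}
    (K : Ω → ℂ) (hK : Measurable K)
    (A : Ω → Matrix (Fin n) (Fin n) ℝ) (hA : ∀ i j, Measurable fun u => A u i j)
    (hAinv : ∀ u, (A u).det ≠ 0)
    (hcomm : ∀ u v, A u * A v = A v * A u)
    (hint : Integrable (fun u => ‖K u‖ * |(A u).det| ^ (-(1:ℝ)/2)) μ)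
    (T : Lp ℂ 2 (volume : Measure (Fin n → ℝ)) →L[ℂ] Lp ℂ 2 (volume : Measure (Fin n → ℝ)))
    (hT : ∀ f : Lp ℂ 2 (volume : Measure (Fin n → ℝ)),
      (T f : (Fin n → ℝ) → ℂ) =ᵐ[volume]
        fun x => ∫ u, K u * (f : (Fin n → ℝ) → ℂ) ((A u).mulVec x) ∂μ) :
    T.comp (ContinuousLinearMap.adjoint T) = (ContinuousLinearMap.adjoint T).comp T := by
  classical
  have hdetinv : ∀ u, ((A u)⁻¹).det ≠ 0 := fun u => by
    rw [Matrix.det_nonsing_inv, Ring.inverse_eq_inv']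
    exact inv_ne_zero (hAinv u)
  -- inner products as integrals
  have inner_eq : ∀ a b : Lp ℂ 2 (volume : Measure (Fin n → ℝ)),
      (inner ℂ a b : ℂ) = ∫ x : Fin n → ℝ,
        conj ((a : (Fin n → ℝ) → ℂ) x) * (b : (Fin n → ℝ) → ℂ) x := by
    intro a b
    rw [L2.inner_def]
    simp_rw [RCLike.inner_apply, mul_comm]
  -- the key Fubini identity
  have key : ∀ h p : Lp ℂ 2 (volume : Measure (Fin n → ℝ)),
      (∫ x : Fin n → ℝ, conj ((h : (Fin n → ℝ) → ℂ) x) * (T p : (Fin n → ℝ) → ℂ) x)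
        = ∫ u, K u * (∫ x : Fin n → ℝ, conj ((h : (Fin n → ℝ) → ℂ) x)
            * (p : (Fin n → ℝ) → ℂ) ((A u).mulVec x)) ∂μ := by
    intro h p
    set F : Ω × (Fin n → ℝ) → ℂ := fun q =>
      K q.1 * (conj ((h : (Fin n → ℝ) → ℂ) q.2)
        * (p : (Fin n → ℝ) → ℂ) ((A q.1).mulVec q.2)) with hFdef
    have hπ : Measurable fun q : Ω × (Fin n → ℝ) => (A q.1).mulVec q.2 :=
      measurable_mulVec_pair (fun i j => hA i j)
    have hqmp : Measure.QuasiMeasurePreserving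
        (fun q : Ω × (Fin n → ℝ) => (A q.1).mulVec q.2) (μ.prod volume) volume := by
      refine ⟨hπ, Measure.AbsolutelyContinuous.mk fun s hs hs0 => ?_⟩
      rw [Measure.map_apply hπ hs, Measure.prod_apply (hπ hs)]
      have hz : ∀ u : Ω, volume (Prod.mk u ⁻¹'
          ((fun q : Ω × (Fin n → ℝ) => (A q.1).mulVec q.2) ⁻¹' s)) = 0 := by
        intro u
        have he : Prod.mk u ⁻¹'
            ((fun q : Ω × (Fin n → ℝ) => (A q.1).mulVec q.2) ⁻¹' s)
            = (fun x : Fin n → ℝ => (A u).mulVec x) ⁻¹' s := rfl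
        rw [he, ← Measure.map_apply (measurable_mulVec (A u)) hs, map_mulVec (hAinv u),
          Measure.smul_apply, hs0, smul_zero]
      simp [hz]
    have hFm : AEStronglyMeasurable F (μ.prod volume) := by
      refine ((hK.comp measurable_fst).aestronglyMeasurable).mul ?_
      refine AEStronglyMeasurable.mul ?_ ?_
      · exact Complex.continuous_conj.comp_aestronglyMeasurable
          ((Lp.aestronglyMeasurable h).comp_quasiMeasurePreserving
            Measure.quasiMeasurePreserving_snd)
      · exact (Lp.aestronglyMeasurable p).comp_quasiMeasurePreserving hqmp
    have hslice : ∀ u : Ω, Integrable (fun x => F (u, x)) volume := by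
      intro u
      exact (integrable_mul_memℒp2 (memℒp_conj (Lp.memLp h))
        (memℒp_comp_mulVec (hAinv u) (Lp.memLp p))).const_mul (K u)
    have hbnd : ∀ u : Ω, (∫ x : Fin n → ℝ, ‖F (u, x)‖)
        ≤ ‖K u‖ * |(A u).det| ^ (-(1:ℝ)/2)
          * ((eLpNorm (h : (Fin n → ℝ) → ℂ) 2 volume).toReal
            * (eLpNorm (p : (Fin n → ℝ) → ℂ) 2 volume).toReal) := by
      intro u
      have e1 : ∀ x : Fin n → ℝ, ‖F (u, x)‖ = ‖K u‖ * (‖(h : (Fin n → ℝ) → ℂ) x‖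
          * ‖(p : (Fin n → ℝ) → ℂ) ((A u).mulVec x)‖) := by
        intro x; simp [hFdef, norm_mul]
      calc (∫ x : Fin n → ℝ, ‖F (u, x)‖)
          = ∫ x : Fin n → ℝ, ‖K u‖ * (‖(h : (Fin n → ℝ) → ℂ) x‖
            * ‖(p : (Fin n → ℝ) → ℂ) ((A u).mulVec x)‖) := by simp_rw [e1]
        _ = ‖K u‖ * ∫ x : Fin n → ℝ, ‖(h : (Fin n → ℝ) → ℂ) x‖
            * ‖(p : (Fin n → ℝ) → ℂ) ((A u).mulVec x)‖ := integral_const_mul _ _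
        _ ≤ ‖K u‖ * ((eLpNorm (h : (Fin n → ℝ) → ℂ) 2 volume).toReal
            * (eLpNorm (fun x : Fin n → ℝ =>
                (p : (Fin n → ℝ) → ℂ) ((A u).mulVec x)) 2 volume).toReal) := by
            refine mul_le_mul_of_nonneg_left ?_ (norm_nonneg _)
            exact cs_bound (Lp.memLp h) (memℒp_comp_mulVec (hAinv u) (Lp.memLp p))
        _ = ‖K u‖ * |(A u).det| ^ (-(1:ℝ)/2)
            * ((eLpNorm (h : (Fin n → ℝ) → ℂ) 2 volume).toReal
              * (eLpNorm (p : (Fin n → ℝ) → ℂ) 2 volume).toReal) := by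
            rw [toReal_eLpNorm_comp_mulVec (hAinv u) (Lp.aestronglyMeasurable p)]
            ring
    have hFint : Integrable F (μ.prod volume) := by
      rw [integrable_prod_iff hFm]
      constructor
      · exact Filter.Eventually.of_forall hslice
      · refine Integrable.mono' (hint.mul_const
          ((eLpNorm (h : (Fin n → ℝ) → ℂ) 2 volume).toReal
            * (eLpNorm (p : (Fin n → ℝ) → ℂ) 2 volume).toReal))
          (hFm.norm.integral_prod_right') ?_
        refine Filter.Eventually.of_forall fun u => ?_
        rw [Real.norm_of_nonneg (integral_nonneg fun x => norm_nonneg _)]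
        exact hbnd u
    have step2 : ∀ x : Fin n → ℝ,
        conj ((h : (Fin n → ℝ) → ℂ) x)
            * (∫ u, K u * (p : (Fin n → ℝ) → ℂ) ((A u).mulVec x) ∂μ)
          = ∫ u, F (u, x) ∂μ := by
      intro x
      rw [← integral_const_mul]
      simp_rw [hFdef, mul_left_comm]
    have step3 : ∀ u : Ω, (∫ x : Fin n → ℝ, F (u, x))
        = K u * ∫ x : Fin n → ℝ, conj ((h : (Fin n → ℝ) → ℂ) x)
            * (p : (Fin n → ℝ) → ℂ) ((A u).mulVec x) := by
      intro u
      simp only [hFdef]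
      rw [integral_const_mul]
    calc (∫ x : Fin n → ℝ, conj ((h : (Fin n → ℝ) → ℂ) x) * (T p : (Fin n → ℝ) → ℂ) x)
        = ∫ x : Fin n → ℝ, conj ((h : (Fin n → ℝ) → ℂ) x)
            * (∫ u, K u * (p : (Fin n → ℝ) → ℂ) ((A u).mulVec x) ∂μ) :=
          integral_congr_ae ((hT p).mono fun x hx => by simp only [hx])
      _ = ∫ x : Fin n → ℝ, ∫ u, F (u, x) ∂μ := by simp_rw [step2]
      _ = ∫ u, ∫ x : Fin n → ℝ, F (u, x) ∂volume ∂μ :=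
          (integral_integral_swap hFint).symm
      _ = ∫ u, K u * (∫ x : Fin n → ℝ, conj ((h : (Fin n → ℝ) → ℂ) x)
            * (p : (Fin n → ℝ) → ℂ) ((A u).mulVec x)) ∂μ := by simp_rw [step3]
  -- main argument
  refine ContinuousLinearMap.ext fun f => ?_
  refine ext_inner_right ℂ fun g => ?_
  simp only [ContinuousLinearMap.comp_apply]
  rw [ContinuousLinearMap.adjoint_inner_left,
    ← inner_conj_symm (T ((ContinuousLinearMap.adjoint T) f)) g]
  -- abbreviations
  set cf := (eLpNorm ((f : Lp ℂ 2 (volume : Measure (Fin n → ℝ))) : (Fin n → ℝ) → ℂ) 2 volume).toReal with hcf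
  set cg := (eLpNorm ((g : Lp ℂ 2 (volume : Measure (Fin n → ℝ))) : (Fin n → ℝ) → ℂ) 2 volume).toReal with hcg
  set D : Ω → ℂ := fun u => ((|(A u).det|⁻¹ : ℝ) : ℂ) with hD
  set W : Ω → Ω → ℂ := fun u v => ∫ x : Fin n → ℝ,
    conj ((f : (Fin n → ℝ) → ℂ) ((A u).mulVec x))
      * (g : (Fin n → ℝ) → ℂ) ((A v).mulVec x) with hW
  set Z : Ω → Ω → ℂ := fun u v => ∫ x : Fin n → ℝ,
    conj ((f : (Fin n → ℝ) → ℂ) x)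
      * (g : (Fin n → ℝ) → ℂ) (((A u)⁻¹ * A v).mulVec x) with hZ
  set Y : Ω → Ω → ℂ := fun u v => ∫ x : Fin n → ℝ,
    conj ((g : (Fin n → ℝ) → ℂ) ((A v).mulVec x))
      * (f : (Fin n → ℝ) → ℂ) ((A u).mulVec x) with hY
  set G : Ω × Ω → ℂ := fun q => K q.2 * conj (K q.1) * W q.1 q.2 with hG
  -- W = D * Z  (uses commutativity)
  have hWZ : ∀ u v, W u v = D u * Z u v := by
    intro u v
    have hBdet : (A v * (A u)⁻¹).det ≠ 0 := by
      rw [Matrix.det_mul]; exact mul_ne_zero (hAinv v) (hdetinv u)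
    have hΨm : AEStronglyMeasurable (fun y : Fin n → ℝ =>
        conj ((f : (Fin n → ℝ) → ℂ) y)
          * (g : (Fin n → ℝ) → ℂ) ((A v * (A u)⁻¹).mulVec y)) volume :=
      (Complex.continuous_conj.comp_aestronglyMeasurable (Lp.aestronglyMeasurable f)).mul
        ((Lp.aestronglyMeasurable g).comp_quasiMeasurePreserving (qmp_mulVec hBdet))
    have step : W u v = ∫ x : Fin n → ℝ, (fun y : Fin n → ℝ =>
        conj ((f : (Fin n → ℝ) → ℂ) y)
          * (g : (Fin n → ℝ) → ℂ) ((A v * (A u)⁻¹).mulVec y)) ((A u).mulVec x) := by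
      simp only [hW]
      refine integral_congr_ae (Filter.Eventually.of_forall fun x => ?_)
      dsimp only
      rw [Matrix.mulVec_mulVec, Matrix.mul_assoc,
        Matrix.nonsing_inv_mul _ (isUnit_iff_ne_zero.2 (hAinv u)), Matrix.mul_one]
    rw [step, integral_comp_mulVec (hAinv u) hΨm]
    congr 1
    simp only [hZ]
    rw [(inv_comm (hAinv u) (hcomm u v)).symm]
  -- conj Y = W
  have hYW : ∀ u v, conj (Y u v) = W u v := by
    intro u v
    simp only [hY, hW, ← integral_conj]
    refine integral_congr_ae (Filter.Eventually.of_forall fun x => ?_)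
    simp [mul_comm]
  -- measurable representatives
  obtain ⟨f', hf'sm, hf'ae⟩ : ∃ f'' : (Fin n → ℝ) → ℂ, StronglyMeasurable f''
      ∧ ((f : Lp ℂ 2 (volume : Measure (Fin n → ℝ))) : (Fin n → ℝ) → ℂ) =ᵐ[volume] f'' :=
    ⟨(Lp.aestronglyMeasurable f).mk _, (Lp.aestronglyMeasurable f).stronglyMeasurable_mk,
      (Lp.aestronglyMeasurable f).ae_eq_mk⟩
  obtain ⟨g', hg'sm, hg'ae⟩ : ∃ g'' : (Fin n → ℝ) → ℂ, StronglyMeasurable g''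
      ∧ ((g : Lp ℂ 2 (volume : Measure (Fin n → ℝ))) : (Fin n → ℝ) → ℂ) =ᵐ[volume] g'' :=
    ⟨(Lp.aestronglyMeasurable g).mk _, (Lp.aestronglyMeasurable g).stronglyMeasurable_mk,
      (Lp.aestronglyMeasurable g).ae_eq_mk⟩
  have hWW' : ∀ u v, W u v
      = ∫ x : Fin n → ℝ, conj (f' ((A u).mulVec x)) * g' ((A v).mulVec x) := by
    intro u v
    simp only [hW]
    refine integral_congr_ae ?_
    filter_upwards [ae_comp_mulVec (hAinv u) hf'ae, ae_comp_mulVec (hAinv v) hg'ae] with x h1 h2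
    simp only [h1, h2]
  have hWm : StronglyMeasurable fun q : Ω × Ω =>
      ∫ x : Fin n → ℝ, conj (f' ((A q.1).mulVec x)) * g' ((A q.2).mulVec x) := by
    apply MeasureTheory.StronglyMeasurable.integral_prod_right'
      (f := fun qx : (Ω × Ω) × (Fin n → ℝ) =>
        conj (f' ((A qx.1.1).mulVec qx.2)) * g' ((A qx.1.2).mulVec qx.2))
    refine StronglyMeasurable.mul ?_ ?_
    · exact Complex.continuous_conj.comp_stronglyMeasurable
        (hf'sm.comp_measurable
          (measurable_mulVec_pair (fun i j => (hA i j).comp measurable_fst)))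
    · exact hg'sm.comp_measurable
        (measurable_mulVec_pair (fun i j => (hA i j).comp measurable_snd))
  have hGm : AEStronglyMeasurable G (μ.prod μ) := by
    have hGe : G = fun q : Ω × Ω => K q.2 * conj (K q.1)
        * (∫ x : Fin n → ℝ, conj (f' ((A q.1).mulVec x)) * g' ((A q.2).mulVec x)) := by
      funext q; simp only [hG]; rw [hWW' q.1 q.2]
    rw [hGe]
    exact (((hK.comp measurable_snd).aestronglyMeasurable).mul
      (Complex.continuous_conj.comp_aestronglyMeasurable
        (hK.comp measurable_fst).aestronglyMeasurable)).mul hWm.aestronglyMeasurable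
  have hWb : ∀ u v, ‖W u v‖
      ≤ (|(A u).det| ^ (-(1:ℝ)/2) * cf) * (|(A v).det| ^ (-(1:ℝ)/2) * cg) := by
    intro u v
    calc ‖W u v‖ ≤ ∫ x : Fin n → ℝ,
          ‖conj ((f : (Fin n → ℝ) → ℂ) ((A u).mulVec x))
            * (g : (Fin n → ℝ) → ℂ) ((A v).mulVec x)‖ := by
          simp only [hW]; exact norm_integral_le_integral_norm _
      _ = ∫ x : Fin n → ℝ, ‖(f : (Fin n → ℝ) → ℂ) ((A u).mulVec x)‖
            * ‖(g : (Fin n → ℝ) → ℂ) ((A v).mulVec x)‖ := by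
          simp [norm_mul]
      _ ≤ (eLpNorm (fun x : Fin n → ℝ => (f : (Fin n → ℝ) → ℂ) ((A u).mulVec x)) 2 volume).toReal
            * (eLpNorm (fun x : Fin n → ℝ => (g : (Fin n → ℝ) → ℂ) ((A v).mulVec x)) 2 volume).toReal :=
          cs_bound (memℒp_comp_mulVec (hAinv u) (Lp.memLp f))
            (memℒp_comp_mulVec (hAinv v) (Lp.memLp g))
      _ = (|(A u).det| ^ (-(1:ℝ)/2) * cf) * (|(A v).det| ^ (-(1:ℝ)/2) * cg) := by
          rw [toReal_eLpNorm_comp_mulVec (hAinv u) (Lp.aestronglyMeasurable f),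
            toReal_eLpNorm_comp_mulVec (hAinv v) (Lp.aestronglyMeasurable g)]
  have hGint : Integrable G (μ.prod μ) := by
    refine Integrable.mono' ((hint.mul_const cf).mul_prod (hint.mul_const cg)) hGm
      (Filter.Eventually.of_forall fun q => ?_)
    calc ‖G q‖ = ‖K q.2‖ * ‖K q.1‖ * ‖W q.1 q.2‖ := by
          simp [hG, norm_mul]
      _ ≤ ‖K q.2‖ * ‖K q.1‖ * ((|(A q.1).det| ^ (-(1:ℝ)/2) * cf)
            * (|(A q.2).det| ^ (-(1:ℝ)/2) * cg)) := by
          refine mul_le_mul_of_nonneg_left (hWb q.1 q.2) (by positivity)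
      _ = ‖K q.1‖ * |(A q.1).det| ^ (-(1:ℝ)/2) * cf
            * (‖K q.2‖ * |(A q.2).det| ^ (-(1:ℝ)/2) * cg) := by ring
  -- composed Lp elements
  have memc : ∀ v : Ω, MemLp (fun x : Fin n → ℝ =>
      (g : (Fin n → ℝ) → ℂ) ((A v).mulVec x)) 2 volume :=
    fun v => memℒp_comp_mulVec (hAinv v) (Lp.memLp g)
  have gv_coe : ∀ v : Ω, (((memc v).toLp _ : Lp ℂ 2 (volume : Measure (Fin n → ℝ)))
      : (Fin n → ℝ) → ℂ)
      =ᵐ[volume] fun x => (g : (Fin n → ℝ) → ℂ) ((A v).mulVec x) :=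
    fun v => (memc v).coeFn_toLp
  have meminv : ∀ u : Ω, MemLp (fun x : Fin n → ℝ =>
      (g : (Fin n → ℝ) → ℂ) (((A u)⁻¹).mulVec x)) 2 volume :=
    fun u => memℒp_comp_mulVec (hdetinv u) (Lp.memLp g)
  have giv_coe : ∀ u : Ω, (((meminv u).toLp _ : Lp ℂ 2 (volume : Measure (Fin n → ℝ)))
      : (Fin n → ℝ) → ℂ)
      =ᵐ[volume] fun x => (g : (Fin n → ℝ) → ℂ) (((A u)⁻¹).mulVec x) :=
    fun u => (meminv u).coeFn_toLp
  -- right-hand side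
  have hRHS : (inner ℂ (T f) (T g) : ℂ) = ∫ v, ∫ u, G (u, v) ∂μ ∂μ := by
    rw [inner_eq, key (T f) g]
    refine integral_congr_ae (Filter.Eventually.of_forall fun v => ?_)
    dsimp only
    have e1 : (∫ x : Fin n → ℝ, conj ((T f : (Fin n → ℝ) → ℂ) x)
          * (g : (Fin n → ℝ) → ℂ) ((A v).mulVec x))
        = conj (∫ x : Fin n → ℝ, conj ((g : (Fin n → ℝ) → ℂ) ((A v).mulVec x))
            * (T f : (Fin n → ℝ) → ℂ) x) := by
      rw [← integral_conj]
      refine integral_congr_ae (Filter.Eventually.of_forall fun x => ?_)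
      simp [mul_comm]
    have e2 : (∫ x : Fin n → ℝ, conj ((g : (Fin n → ℝ) → ℂ) ((A v).mulVec x))
          * (T f : (Fin n → ℝ) → ℂ) x)
        = ∫ x : Fin n → ℝ, conj ((((memc v).toLp _ : Lp ℂ 2 (volume : Measure (Fin n → ℝ)))
            : (Fin n → ℝ) → ℂ) x) * (T f : (Fin n → ℝ) → ℂ) x :=
      (integral_congr_ae ((gv_coe v).mono fun x hx => by simp only [hx])).symm
    have e4 : ∀ u : Ω, (∫ x : Fin n → ℝ,
          conj ((((memc v).toLp _ : Lp ℂ 2 (volume : Measure (Fin n → ℝ)))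
            : (Fin n → ℝ) → ℂ) x) * (f : (Fin n → ℝ) → ℂ) ((A u).mulVec x)) = Y u v := by
      intro u
      simp only [hY]
      exact integral_congr_ae ((gv_coe v).mono fun x hx => by simp only [hx])
    rw [e1, e2, key ((memc v).toLp _) f, ← integral_conj, ← integral_const_mul]
    refine integral_congr_ae (Filter.Eventually.of_forall fun u => ?_)
    dsimp only
    rw [_root_.map_mul, e4 u, hYW u v]
    simp only [hG]
    ring
  -- left-hand side
  have hLHS : (inner ℂ g (T ((ContinuousLinearMap.adjoint T) f)) : ℂ)
      = ∫ u, K u * (D u * conj (∫ v, K v * Z u v ∂μ)) ∂μ := by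
    rw [inner_eq, key g ((ContinuousLinearMap.adjoint T) f)]
    refine integral_congr_ae (Filter.Eventually.of_forall fun u => ?_)
    dsimp only
    congr 1
    have ea : (∫ x : Fin n → ℝ, conj ((g : (Fin n → ℝ) → ℂ) x)
          * ((T.adjoint f : Lp ℂ 2 (volume : Measure (Fin n → ℝ))) : (Fin n → ℝ) → ℂ)
            ((A u).mulVec x))
        = ∫ x : Fin n → ℝ, (fun y : Fin n → ℝ =>
            conj ((g : (Fin n → ℝ) → ℂ) (((A u)⁻¹).mulVec y))
              * ((T.adjoint f : Lp ℂ 2 (volume : Measure (Fin n → ℝ)))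
                : (Fin n → ℝ) → ℂ) y) ((A u).mulVec x) := by
      refine integral_congr_ae (Filter.Eventually.of_forall fun x => ?_)
      dsimp only
      have hx : ((A u)⁻¹).mulVec ((A u).mulVec x) = x := by
        rw [Matrix.mulVec_mulVec, Matrix.nonsing_inv_mul _ (isUnit_iff_ne_zero.2 (hAinv u)),
          Matrix.one_mulVec]
      rw [hx]
    have eb : AEStronglyMeasurable (fun y : Fin n → ℝ =>
        conj ((g : (Fin n → ℝ) → ℂ) (((A u)⁻¹).mulVec y))
          * ((T.adjoint f : Lp ℂ 2 (volume : Measure (Fin n → ℝ))) : (Fin n → ℝ) → ℂ) y)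
        volume :=
      (Complex.continuous_conj.comp_aestronglyMeasurable
        ((Lp.aestronglyMeasurable g).comp_quasiMeasurePreserving
          (qmp_mulVec (hdetinv u)))).mul (Lp.aestronglyMeasurable _)
    rw [ea, integral_comp_mulVec (hAinv u) eb]
    congr 1
    have ec : (∫ y : Fin n → ℝ, conj ((g : (Fin n → ℝ) → ℂ) (((A u)⁻¹).mulVec y))
          * ((T.adjoint f : Lp ℂ 2 (volume : Measure (Fin n → ℝ))) : (Fin n → ℝ) → ℂ) y)
        = ∫ y : Fin n → ℝ,
            conj ((((meminv u).toLp _ : Lp ℂ 2 (volume : Measure (Fin n → ℝ)))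
              : (Fin n → ℝ) → ℂ) y)
            * ((T.adjoint f : Lp ℂ 2 (volume : Measure (Fin n → ℝ))) : (Fin n → ℝ) → ℂ) y :=
      (integral_congr_ae ((giv_coe u).mono fun y hy => by simp only [hy])).symm
    rw [ec, ← inner_eq ((meminv u).toLp _) (T.adjoint f),
      ContinuousLinearMap.adjoint_inner_right,
      ← inner_conj_symm (T ((meminv u).toLp _)) f, inner_eq, key f ((meminv u).toLp _)]
    congr 1
    refine integral_congr_ae (Filter.Eventually.of_forall fun v => ?_)
    dsimp only
    congr 1
    simp only [hZ]
    refine integral_congr_ae ?_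
    filter_upwards [ae_comp_mulVec (hAinv v) (giv_coe u)] with x hx
    simp only [hx, Matrix.mulVec_mulVec]
  -- assemble
  calc conj (inner ℂ g (T ((ContinuousLinearMap.adjoint T) f)) : ℂ)
      = conj (∫ u, K u * (D u * conj (∫ v, K v * Z u v ∂μ)) ∂μ) := by rw [hLHS]
    _ = ∫ u, conj (K u * (D u * conj (∫ v, K v * Z u v ∂μ))) ∂μ := integral_conj.symm
    _ = ∫ u, ∫ v, G (u, v) ∂μ ∂μ := by
        refine integral_congr_ae (Filter.Eventually.of_forall fun u => ?_)
        dsimp only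
        rw [_root_.map_mul, _root_.map_mul, RCLike.conj_conj]
        have hDu : conj (D u) = D u := by simp only [hD]; exact Complex.conj_ofReal _
        rw [hDu, ← integral_const_mul, ← integral_const_mul]
        refine integral_congr_ae (Filter.Eventually.of_forall fun v => ?_)
        dsimp only
        simp only [hG]
        rw [hWZ u v]
        ring
    _ = ∫ v, ∫ u, G (u, v) ∂μ ∂μ := integral_integral_swap hGint
    _ = (inner ℂ (T f) (T g) : ℂ) := hRHS.symm
end

section
/- Let Φ : ℝⁿ → Mat_m(ℂ) be continuous and bounded, and suppose the set E(λ) = {s ∈ ℝⁿ : det(λI − Φ(s)) = 0} has positive Lebesgue measure. Then λ is an eigenvalue of the multiplication operator M_Φ on L²(ℝⁿ; ℂᵐ). -/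
open MeasureTheory

open Matrix

noncomputable def cofVec {m r : ℕ} (A : Matrix (Fin m) (Fin m) ℂ)
    (I : Fin r → Fin m) (J : Fin (r+1) → Fin m) : Fin m → ℂ :=
  fun j => ∑ k : Fin (r+1), if J k = j then
    (-1 : ℂ)^(k:ℕ) * (A.submatrix I (J ∘ k.succAbove)).det else 0

lemma mulVec_cofVec {m r : ℕ} (A : Matrix (Fin m) (Fin m) ℂ)
    (I : Fin r → Fin m) (J : Fin (r+1) → Fin m) (i : Fin m) :
    (A.mulVec (cofVec A I J)) i = (A.submatrix (Fin.cons i I) J).det := by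
  rw [Matrix.det_succ_row_zero]
  simp only [mulVec, dotProduct, cofVec, Finset.mul_sum, mul_ite, mul_zero]
  rw [Finset.sum_comm]
  refine Finset.sum_congr rfl fun k _ => ?_
  rw [Finset.sum_ite_eq Finset.univ (J k) (fun j => A i j * ((-1:ℂ)^(k:ℕ) * (A.submatrix I (J ∘ k.succAbove)).det))]
  have h1 : (A.submatrix (Fin.cons i I) J) 0 k = A i (J k) := by simp
  have h2 : ((A.submatrix (Fin.cons i I) J).submatrix Fin.succ k.succAbove)
      = A.submatrix I (J ∘ k.succAbove) := by
    ext a b; simp [Matrix.submatrix]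
  rw [h1, h2]
  simp; ring

open Classical in
lemma exists_candidate {m : ℕ} (A : Matrix (Fin m) (Fin m) ℂ) (hA : A.det = 0) :
    ∃ r : ℕ, r < m ∧ ∃ (I : Fin r → Fin m) (J : Fin (r+1) → Fin m),
      A.mulVec (cofVec A I J) = 0 ∧ cofVec A I J ≠ 0 := by
  set P : ℕ → Prop := fun r => ∃ (I : Fin r → Fin m) (J : Fin r → Fin m),
    Function.Injective I ∧ Function.Injective J ∧ (A.submatrix I J).det ≠ 0 with hP
  have hP0 : P 0 := by
    refine ⟨Fin.elim0, Fin.elim0, ?_, ?_, ?_⟩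
    · intro a; exact a.elim0
    · intro a; exact a.elim0
    · rw [Matrix.det_fin_zero]; exact one_ne_zero
  have hPm : ¬ P m := by
    rintro ⟨I, J, hI, hJ, hd⟩
    have eI : Function.Bijective I := (Finite.injective_iff_bijective).mp hI
    have eJ : Function.Bijective J := (Finite.injective_iff_bijective).mp hJ
    set e₁ := Equiv.ofBijective I eI
    set e₂ := Equiv.ofBijective J eJ
    have : A.submatrix I J = (A.submatrix id ⇑e₂).submatrix ⇑e₁ id := by
      ext a b; rfl
    rw [this, Matrix.det_permute, Matrix.det_permute'] at hd
    simp [hA] at hd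
  set r := Nat.findGreatest P m with hr
  have hPr : P r := Nat.findGreatest_spec (Nat.zero_le m) hP0
  have hrm : r < m := lt_of_le_of_ne (Nat.findGreatest_le m) (fun h => hPm (h ▸ hPr))
  have hmax : ¬ P (r + 1) := Nat.findGreatest_is_greatest (Nat.lt_succ_self r) (by omega)
  obtain ⟨I, J₀, hI, hJ₀, hdet⟩ := hPr
  have hj : ∃ j : Fin m, j ∉ Set.range J₀ := by
    by_contra h
    push_neg at h
    have hsurj : Function.Surjective J₀ := fun j => h j
    have := Fintype.card_le_of_surjective J₀ hsurj
    simp at this; omega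
  obtain ⟨j₀, hj₀⟩ := hj
  set J : Fin (r+1) → Fin m := Fin.snoc J₀ j₀ with hJdef
  have hJ : Function.Injective J := by
    intro a b hab
    induction a using Fin.lastCases with
    | last =>
      induction b using Fin.lastCases with
      | last => rfl
      | cast b =>
        exfalso; apply hj₀
        rw [hJdef] at hab; simp [Fin.snoc_castSucc] at hab
        exact ⟨b, hab.symm⟩
    | cast a =>
      induction b using Fin.lastCases with
      | last =>
        exfalso; apply hj₀
        rw [hJdef] at hab; simp [Fin.snoc_castSucc] at hab
        exact ⟨a, hab⟩
      | cast b =>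
        rw [hJdef] at hab; simp [Fin.snoc_castSucc] at hab
        rw [hJ₀ hab]
  have hJcast : J ∘ Fin.castSucc = J₀ := by
    funext k; simp [hJdef, Fin.snoc_castSucc]
  refine ⟨r, hrm, I, J, ?_, ?_⟩
  · funext i
    rw [mulVec_cofVec]
    show (A.submatrix (Fin.cons i I) J).det = 0
    by_cases hi : ∃ l, I l = i
    · obtain ⟨l, hl⟩ := hi
      refine Matrix.det_zero_of_row_eq (i := 0) (j := l.succ) (Fin.succ_ne_zero l).symm ?_
      funext k; simp [Matrix.submatrix, Fin.cons_succ, hl]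
    · push_neg at hi
      have hInj : Function.Injective (Fin.cons i I) := by
        intro a b hab
        induction a using Fin.cases with
        | zero =>
          induction b using Fin.cases with
          | zero => rfl
          | succ b => exfalso; exact hi b (by simpa using hab.symm)
        | succ a =>
          induction b using Fin.cases with
          | zero => exfalso; exact hi a (by simpa using hab)
          | succ b => simp only [Fin.cons_succ] at hab; rw [hI hab]
      by_contra hne
      exact hmax ⟨Fin.cons i I, J, hInj, hJ, hne⟩
  · intro h0
    have := congrFun h0 (J (Fin.last r))
    simp only [cofVec, Pi.zero_apply] at this
    rw [Finset.sum_eq_single_of_mem (Fin.last r) (Finset.mem_univ _)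
      (fun k _ hk => by rw [if_neg (fun h => hk (hJ h))])] at this
    rw [if_pos rfl, Fin.succAbove_last, hJcast] at this
    rcases mul_eq_zero.mp this with h | h
    · exact pow_ne_zero _ (by norm_num : (-1:ℂ) ≠ 0) h
    · exact hdet h


/-- If `E(λ) = {s : det(λ - Φ s) = 0}` has positive Lebesgue measure, then `λ` is an
eigenvalue of the multiplication operator `M_Φ` on L²(ℝⁿ; ℂᵐ). -/
theorem matrix_mult_op_eigenvalue {n m : ℕ}
    (Φ : (Fin n → ℝ) → Matrix (Fin m) (Fin m) ℂ)
    (hΦc : ∀ i j, Continuous fun s => Φ s i j) (C : ℝ) (hΦb : ∀ s i j, ‖Φ s i j‖ ≤ C)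
    (M : Lp (EuclideanSpace ℂ (Fin m)) 2 (volume : Measure (Fin n → ℝ)) →L[ℂ]
         Lp (EuclideanSpace ℂ (Fin m)) 2 (volume : Measure (Fin n → ℝ)))
    (hM : ∀ f : Lp (EuclideanSpace ℂ (Fin m)) 2 (volume : Measure (Fin n → ℝ)),
      ∀ᵐ s ∂(volume : Measure (Fin n → ℝ)), ∀ i : Fin m,
        (M f : (Fin n → ℝ) → EuclideanSpace ℂ (Fin m)) s i
          = (Φ s).mulVec ((f : (Fin n → ℝ) → EuclideanSpace ℂ (Fin m)) s) i)
    (lam : ℂ)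
    (hE : 0 < volume {s : Fin n → ℝ | (lam • (1 : Matrix (Fin m) (Fin m) ℂ) - Φ s).det = 0}) :
    ∃ f : Lp (EuclideanSpace ℂ (Fin m)) 2 (volume : Measure (Fin n → ℝ)),
      f ≠ 0 ∧ M f = lam • f := by
  classical
  set μ : Measure (Fin n → ℝ) := volume with hμ
  set A : (Fin n → ℝ) → Matrix (Fin m) (Fin m) ℂ :=
    fun s => lam • (1 : Matrix (Fin m) (Fin m) ℂ) - Φ s with hAdef
  have hAc : Continuous A := by
    apply continuous_matrix
    intro i j
    simp only [hAdef, Matrix.sub_apply]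
    exact continuous_const.sub (hΦc i j)
  -- candidate index type
  let ι := Σ r : Fin m, ((Fin (r : ℕ) → Fin m) × (Fin ((r : ℕ) + 1) → Fin m))
  let w : ι → (Fin n → ℝ) → (Fin m → ℂ) := fun c s => cofVec (A s) c.2.1 c.2.2
  have hwc : ∀ c, Continuous (w c) := by
    intro c
    apply continuous_pi
    intro j
    apply continuous_finset_sum
    intro k _
    by_cases h : c.2.2 k = j
    · simp only [w, cofVec, if_pos h]
      exact continuous_const.mul ((continuous_matrix (fun a b =>
        hAc.matrix_elem _ _)).matrix_det)
    · simp only [w, cofVec, if_neg h]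
      exact continuous_const
  -- candidate sets
  let S : ι → Set (Fin n → ℝ) := fun c => {s | (A s).mulVec (w c s) = 0 ∧ w c s ≠ 0}
  have hSm : ∀ c, MeasurableSet (S c) := by
    intro c
    have h1 : MeasurableSet {s | (A s).mulVec (w c s) = 0} := by
      have : {s | (A s).mulVec (w c s) = 0} = ⋂ i, {s | ((A s).mulVec (w c s)) i = 0} := by
        ext s; simp [funext_iff]
      rw [this]
      refine MeasurableSet.iInter fun i => ?_
      have hc : Continuous fun s => ((A s).mulVec (w c s)) i := by
        simp only [Matrix.mulVec, dotProduct]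
        exact continuous_finset_sum _ fun j _ =>
          (hAc.matrix_elem i j).mul ((continuous_apply j).comp (hwc c))
      exact (isClosed_eq hc continuous_const).measurableSet
    have h2 : MeasurableSet {s | w c s ≠ 0} := by
      have : {s | w c s ≠ 0} = ⋃ j, {s | w c s j ≠ 0} := by
        ext s; simp [funext_iff]
      rw [this]
      refine MeasurableSet.iUnion fun j => ?_
      exact (isClosed_eq ((continuous_apply j).comp (hwc c)) continuous_const).measurableSet.compl
    exact h1.inter h2
  -- coverage
  have hcover : {s : Fin n → ℝ | (A s).det = 0} ⊆ ⋃ c, S c := by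
    intro s hs
    obtain ⟨r, hr, I, J, h1, h2⟩ := exists_candidate (A s) hs
    exact Set.mem_iUnion.mpr ⟨⟨⟨r, hr⟩, I, J⟩, h1, h2⟩
  have hex : ∃ c, μ (S c) ≠ 0 := by
    by_contra h
    push_neg at h
    have : μ {s : Fin n → ℝ | (A s).det = 0} = 0 :=
      measure_mono_null hcover (measure_iUnion_null h)
    rw [hAdef] at this
    exact absurd this (ne_of_gt hE)
  obtain ⟨c, hc⟩ := hex
  -- intersect with a ball
  have hball : ∃ R : ℕ, μ (S c ∩ Metric.closedBall 0 R) ≠ 0 := by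
    by_contra h
    push_neg at h
    apply hc
    have : S c ⊆ ⋃ R : ℕ, (S c ∩ Metric.closedBall 0 R) := by
      intro s hs
      obtain ⟨R, hR⟩ := exists_nat_ge ‖s‖
      refine Set.mem_iUnion.mpr ⟨R, hs, Metric.mem_closedBall.mpr ?_⟩
      rw [dist_zero_right]; exact hR
    exact measure_mono_null this (measure_iUnion_null h)
  obtain ⟨R, hT⟩ := hball
  set T : Set (Fin n → ℝ) := S c ∩ Metric.closedBall 0 R with hTdef
  have hTm : MeasurableSet T := (hSm c).inter measurableSet_closedBall
  have hTfin : μ T < ⊤ :=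
    lt_of_le_of_lt (measure_mono Set.inter_subset_right)
      ((isCompact_closedBall (0 : Fin n → ℝ) R).measure_lt_top)
  -- the vector-valued candidate function
  set W : (Fin n → ℝ) → EuclideanSpace ℂ (Fin m) :=
    fun s => (EuclideanSpace.equiv (Fin m) ℂ).symm (w c s) with hWdef
  have hWc : Continuous W := (EuclideanSpace.equiv (Fin m) ℂ).symm.continuous.comp (hwc c)
  -- bound on the ball
  obtain ⟨s₀, _, hs₀⟩ := (isCompact_closedBall (0 : Fin n → ℝ) R).exists_isMaxOn
    ⟨0, Metric.mem_closedBall_self (by positivity)⟩ (hWc.norm.continuousOn)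
  set K : ℝ := ‖W s₀‖ with hK
  set g : (Fin n → ℝ) → EuclideanSpace ℂ (Fin m) := T.indicator W with hgdef
  have hg : MemLp g 2 μ := by
    rw [hgdef, memLp_indicator_iff_restrict hTm]
    haveI : IsFiniteMeasure (μ.restrict T) := ⟨by rwa [Measure.restrict_apply_univ]⟩
    refine MemLp.of_bound (hWc.stronglyMeasurable.aestronglyMeasurable) K ?_
    filter_upwards [ae_restrict_mem hTm] with s hs
    exact hs₀ hs.2
  refine ⟨hg.toLp g, ?_, ?_⟩
  · intro h0
    have hgae : g =ᵐ[μ] 0 := by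
      have h1 : (↑(hg.toLp g) : (Fin n → ℝ) → EuclideanSpace ℂ (Fin m)) =ᵐ[μ] g := hg.coeFn_toLp
      have h2 : (↑(hg.toLp g) : (Fin n → ℝ) → EuclideanSpace ℂ (Fin m)) =ᵐ[μ] 0 := by
        rw [h0]; exact Lp.coeFn_zero _ _ _
      exact h1.symm.trans h2
    have : μ T = 0 := by
      refine measure_mono_null ?_ (ae_iff.mp hgae)
      intro s hs
      simp only [Set.mem_setOf_eq, Pi.zero_apply]
      have : g s = W s := Set.indicator_of_mem hs W
      rw [this]
      intro hW0
      apply hs.1.2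
      funext j
      have := congrArg (fun (x : EuclideanSpace ℂ (Fin m)) => x j) hW0
      simpa [hWdef] using this
    exact hT this
  · set f := hg.toLp g with hf
    apply Lp.ext
    filter_upwards [hM f, hg.coeFn_toLp, Lp.coeFn_smul lam f] with s hs1 hs2 hs3
    rw [hs3]
    have key : ∀ i, (Φ s).mulVec (g s) i = lam * g s i := by
      intro i
      by_cases hsT : s ∈ T
      · have hker : (A s).mulVec (w c s) = 0 := hsT.1.1
        have hgW : ∀ j, g s j = w c s j := by
          intro j
          rw [hgdef, Set.indicator_of_mem hsT]
          rfl
        have heq : (g s : Fin m → ℂ) = w c s := funext hgW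
        have h := congrFun hker i
        rw [hAdef] at h
        simp only [Matrix.sub_mulVec, Matrix.smul_mulVec, Matrix.one_mulVec,
          Pi.sub_apply, Pi.smul_apply, smul_eq_mul, Pi.zero_apply, sub_eq_zero] at h
        show (Φ s).mulVec (g s : Fin m → ℂ) i = lam * g s i
        rw [heq, ← h]
      · have hg0 : g s = 0 := Set.indicator_of_notMem hsT W
        have h0 : (g s : Fin m → ℂ) = (0 : Fin m → ℂ) := by
          funext j; rw [hg0]; rfl
        show (Φ s).mulVec (g s : Fin m → ℂ) i = lam * g s i
        rw [h0, Matrix.mulVec_zero]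
        simp
    ext i
    rw [hs1 i]
    have hfs : (↑↑f : (Fin n → ℝ) → EuclideanSpace ℂ (Fin m)) s = g s := hs2
    have hR2 : (lam • (↑↑f : (Fin n → ℝ) → EuclideanSpace ℂ (Fin m))) s i = lam * g s i := by
      rw [Pi.smul_apply, hfs]; rfl
    rw [hR2, hfs, ← key i]
end

section
/- For α > 0 and n ≥ 1, the function t ↦ |Γ(α+1)Γ(n/2 + it)/Γ(α + n/2 + it)| on ℝ attains its maximum at t = 0, with maximum value Γ(α+1)Γ(n/2)/Γ(α + n/2). -/
open Complex

/-- The function `t ↦ |Γ(α+1)Γ(n/2+it)/Γ(α+n/2+it)|` attains its maximum at `t = 0`,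
with maximum value `Γ(α+1)Γ(n/2)/Γ(α+n/2)`. -/
theorem gamma_ratio_max (α : ℝ) (hα : 0 < α) (n : ℕ) (hn : 1 ≤ n) :
    (∀ t : ℝ,
      ‖Complex.Gamma ((α : ℂ) + 1) * Complex.Gamma ((n / 2 : ℂ) + Complex.I * t) /
          Complex.Gamma ((α : ℂ) + (n / 2 : ℂ) + Complex.I * t)‖
        ≤ Real.Gamma (α + 1) * Real.Gamma (n / 2) / Real.Gamma (α + n / 2)) ∧
    ‖Complex.Gamma ((α : ℂ) + 1) * Complex.Gamma ((n / 2 : ℂ) + Complex.I * (0:ℝ)) /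
        Complex.Gamma ((α : ℂ) + (n / 2 : ℂ) + Complex.I * (0:ℝ))‖
      = Real.Gamma (α + 1) * Real.Gamma (n / 2) / Real.Gamma (α + n / 2) := by
  have hn0 : (0:ℝ) < n := by exact_mod_cast hn
  have hn2 : (0:ℝ) < (n:ℝ) / 2 := by linarith
  set R : ℝ := Real.Gamma α * Real.Gamma ((n:ℝ) / 2) / Real.Gamma (α + (n:ℝ) / 2) with hR
  set z : ℝ → ℂ := fun t => (n / 2 : ℂ) + Complex.I * t with hzdef
  have hαre : (0:ℝ) < (α : ℂ).re := by simpa using hα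
  have hzre : ∀ t : ℝ, (z t).re = (n:ℝ) / 2 := by intro t; simp [hzdef]
  have hzpos : ∀ t : ℝ, 0 < (z t).re := fun t => by rw [hzre]; exact hn2
  -- rewrite the expression as α * betaIntegral
  have hbeta : ∀ t : ℝ,
      Complex.Gamma ((α : ℂ) + 1) * Complex.Gamma (z t) /
        Complex.Gamma ((α : ℂ) + (n / 2 : ℂ) + Complex.I * t)
        = (α : ℂ) * Complex.betaIntegral (α : ℂ) (z t) := by
    intro t
    have h1 := Complex.Gamma_mul_Gamma_eq_betaIntegral hαre (hzpos t)
    have hne : Complex.Gamma ((α : ℂ) + z t) ≠ 0 := by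
      apply Complex.Gamma_ne_zero_of_re_pos
      simp only [Complex.add_re, hzre, Complex.ofReal_re]
      linarith
    have h2 : Complex.Gamma ((α : ℂ) + 1) = (α : ℂ) * Complex.Gamma (α : ℂ) :=
      Complex.Gamma_add_one _ (Complex.ofReal_ne_zero.mpr hα.ne')
    have h3 : (α : ℂ) + (n / 2 : ℂ) + Complex.I * t = (α : ℂ) + z t := by
      rw [hzdef]; ring
    rw [h3, h2, mul_assoc, h1]
    field_simp
  -- the real beta integral
  have hgc : ∫ x in (0:ℝ)..1, ((x ^ (α - 1) * (1 - x) ^ ((n:ℝ) / 2 - 1) : ℝ) : ℂ)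
      = Complex.betaIntegral (α : ℂ) (z 0) := by
    rw [Complex.betaIntegral]
    apply intervalIntegral.integral_congr
    intro x hx
    rw [Set.uIcc_of_le zero_le_one] at hx
    obtain ⟨hx0, hx1⟩ := hx
    push_cast
    rw [Complex.ofReal_cpow hx0, Complex.ofReal_cpow (by linarith : (0:ℝ) ≤ 1 - x)]
    push_cast
    simp [hzdef]
  have hbetaval : Complex.betaIntegral (α : ℂ) (z 0) = (R : ℂ) := by
    have h1 := Complex.Gamma_mul_Gamma_eq_betaIntegral hαre (hzpos 0)
    have hz0 : z 0 = ((α + (n:ℝ)/2 : ℝ) : ℂ) - (α : ℂ) := by rw [hzdef]; push_cast; ring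
    have hz0' : z 0 = (((n:ℝ)/2 : ℝ) : ℂ) := by rw [hzdef]; push_cast; ring
    have hne : Real.Gamma (α + (n:ℝ)/2) ≠ 0 :=
      (Real.Gamma_pos_of_pos (by linarith)).ne'
    rw [hz0'] at h1
    rw [show (α:ℂ) + (((n:ℝ)/2 : ℝ) : ℂ) = ((α + (n:ℝ)/2 : ℝ) : ℂ) by push_cast; ring] at h1
    rw [Complex.Gamma_ofReal, Complex.Gamma_ofReal, Complex.Gamma_ofReal] at h1
    have hne' : ((Real.Gamma (α + (n:ℝ)/2) : ℂ)) ≠ 0 := Complex.ofReal_ne_zero.mpr hne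
    rw [hz0', hR,
      show ((Real.Gamma α * Real.Gamma ((n:ℝ)/2) / Real.Gamma (α + (n:ℝ)/2) : ℝ) : ℂ)
        = ((Real.Gamma α : ℂ) * (Real.Gamma ((n:ℝ)/2) : ℂ) / (Real.Gamma (α + (n:ℝ)/2) : ℂ))
        from by push_cast; ring,
      eq_div_iff hne', h1]
    ring
  have hgval : ∫ x in (0:ℝ)..1, x ^ (α - 1) * (1 - x) ^ ((n:ℝ) / 2 - 1) = R := by
    have := hgc.trans hbetaval
    rw [intervalIntegral.integral_ofReal] at this
    exact_mod_cast this
  have hRnonneg : 0 ≤ R := by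
    rw [hR]
    have := Real.Gamma_pos_of_pos hα
    have := Real.Gamma_pos_of_pos hn2
    have := Real.Gamma_pos_of_pos (show (0:ℝ) < α + (n:ℝ)/2 by linarith)
    positivity
  -- norm bound on the beta integral
  have hnormβ : ∀ t : ℝ, ‖Complex.betaIntegral (α : ℂ) (z t)‖ ≤ R := by
    intro t
    rw [← hgval]
    refine (intervalIntegral.norm_integral_le_integral_norm zero_le_one).trans_eq ?_
    have hne1 : ∀ᵐ x : ℝ, x ≠ 1 := by
      refine MeasureTheory.ae_iff.mpr ?_
      simp
    apply intervalIntegral.integral_congr_ae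
    filter_upwards [hne1] with x hx1 hx
    rw [Set.uIoc_of_le zero_le_one] at hx
    obtain ⟨hx0, hx1'⟩ := hx
    have hxlt : x < 1 := lt_of_le_of_ne hx1' hx1
    rw [norm_mul,
      Complex.norm_cpow_eq_rpow_re_of_pos hx0,
      show ((1:ℂ) - x) = (((1 - x : ℝ)) : ℂ) by push_cast; ring,
      Complex.norm_cpow_eq_rpow_re_of_pos (by linarith : (0:ℝ) < 1 - x)]
    have e1 : (((α:ℂ)) - 1).re = α - 1 := by simp
    have e2 : (z t - 1).re = (n:ℝ)/2 - 1 := by simp [hzdef]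
    rw [e1, e2]
  -- target value
  have htarget : Real.Gamma (α + 1) * Real.Gamma ((n:ℝ) / 2) / Real.Gamma (α + (n:ℝ) / 2)
      = α * R := by
    rw [Real.Gamma_add_one hα.ne', hR]; ring
  have hnormα : ‖(α : ℂ)‖ = α := by
    rw [Complex.norm_real, Real.norm_eq_abs, abs_of_pos hα]
  constructor
  · intro t
    rw [hbeta t, norm_mul, hnormα, htarget]
    exact mul_le_mul_of_nonneg_left (hnormβ t) hα.le
  · rw [hbeta 0, hbetaval, norm_mul, hnormα, htarget, Complex.norm_real,
      Real.norm_eq_abs, _root_.abs_of_nonneg hRnonneg]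
end
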